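/- Let Λ be a lattice of rank n in ℝ^n, let 𝒫 be a measurable fundamental region for Λ, and let l₀ = sup_{x ∈ 𝒫} ‖x‖ < ∞. Then for every r > l₀, (r - l₀)^n · V_n ≤ V(Λ) · #(Λ ∩ B̄_r) ≤ (r + l₀)^n · V_n, where B̄_r is the closed ball of radius r centered at the origin, V_n is the volume of the unit ball in ℝ^n, and #(Λ ∩ B̄_r) is the number of lattice points in B̄_r. -/

import Mathlib

open MeasureTheory Pointwise

noncomputable section

theorem lattice_point_enumerator_bounds
    (n : ℕ) (hn : 0 < n)
    (Λ : Submodule ℤ (EuclideanSpace ℝ (Fin n))) [DiscreteTopology Λ] [IsZLattice ℝ Λ]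
    (P : Set (EuclideanSpace ℝ (Fin n))) (hmeas : MeasurableSet P)
    -- `P` is a fundamental region: every point has a unique representation `y = x + p`
    (hfund : ∀ y : EuclideanSpace ℝ (Fin n), ∃! x : Λ, y - x ∈ P)
    (l₀ : ℝ) (hl₀ : IsLUB (norm '' P) l₀)
    (r : ℝ) (hr : l₀ < r) :
    (r - l₀) ^ n * (volume (Metric.closedBall (0 : EuclideanSpace ℝ (Fin n)) 1)).toReal ≤
      ZLattice.covolume Λ volume *
        (Nat.card ↥((Λ : Set (EuclideanSpace ℝ (Fin n))) ∩ Metric.closedBall 0 r) : ℝ) ∧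
    ZLattice.covolume Λ volume *
        (Nat.card ↥((Λ : Set (EuclideanSpace ℝ (Fin n))) ∩ Metric.closedBall 0 r) : ℝ) ≤
      (r + l₀) ^ n * (volume (Metric.closedBall (0 : EuclideanSpace ℝ (Fin n)) 1)).toReal := by
  -- basic facts about l₀ and P
  have hPsub : P ⊆ Metric.closedBall 0 l₀ := by
    intro p hp
    simpa [Metric.mem_closedBall, dist_eq_norm] using hl₀.1 ⟨p, hp, rfl⟩
  have hl₀0 : 0 ≤ l₀ := by
    obtain ⟨x, hx, -⟩ := hfund 0
    exact le_trans (norm_nonneg _) (hl₀.1 ⟨_, hx, rfl⟩)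
  -- P is a fundamental domain
  have hFD : IsAddFundamentalDomain Λ P volume := by
    apply IsAddFundamentalDomain.mk' hmeas.nullMeasurableSet
    intro y
    obtain ⟨x, hx, hx'⟩ := hfund y
    have key : ∀ g : Λ, g +ᵥ y = y - ↑(-g) := by
      intro g
      show (g : EuclideanSpace ℝ (Fin n)) + y = y - ↑(-g)
      simp [sub_neg_eq_add, add_comm]
    refine ⟨-x, ?_, fun g hg => ?_⟩
    · show -x +ᵥ y ∈ P
      rw [key (-x)]; simpa using hx
    · have hg' : g +ᵥ y ∈ P := hg
      rw [key g] at hg'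
      have := hx' (-g) hg'
      rw [← this]; simp
  have hcov : ZLattice.covolume Λ volume = (volume P).toReal :=
    ZLattice.covolume_eq_measure_fundamentalDomain Λ volume hFD
  -- the set of lattice points in the ball is finite
  have hdiscA : DiscreteTopology Λ.toAddSubgroup := ‹DiscreteTopology Λ›
  have hclosed : IsClosed (Λ : Set (EuclideanSpace ℝ (Fin n))) :=
    AddSubgroup.isClosed_of_discrete (H := Λ.toAddSubgroup)
  have hdisc : DiscreteTopology ((Λ : Set (EuclideanSpace ℝ (Fin n))) : Set _) :=
    ‹DiscreteTopology Λ›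
  have hS : Set.Finite ((Λ : Set (EuclideanSpace ℝ (Fin n))) ∩ Metric.closedBall 0 r) := by
    rw [Set.inter_comm]
    exact Metric.finite_isBounded_inter_isClosed DiscreteTopology.isDiscrete Metric.isBounded_closedBall hclosed
  set S := hS.toFinset with hSdef
  have hcard : (Nat.card ↥((Λ : Set (EuclideanSpace ℝ (Fin n))) ∩ Metric.closedBall 0 r))
      = S.card := by
    rw [Nat.card_eq_card_finite_toFinset hS]
  -- translates are pairwise disjoint
  have hdisj : (S : Set (EuclideanSpace ℝ (Fin n))).PairwiseDisjoint (fun x => x +ᵥ P) := by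
    intro x hx y hy hxy
    simp only [hSdef, Set.Finite.coe_toFinset, Set.mem_inter_iff, SetLike.mem_coe] at hx hy
    refine Set.disjoint_left.2 fun z hzx hzy => hxy ?_
    obtain ⟨p, hp, rfl⟩ := hzx
    obtain ⟨q, hq, hq'⟩ := hzy
    obtain ⟨w, -, hw⟩ := hfund (x +ᵥ p)
    have h1 : (x +ᵥ p) - ((⟨x, hx.1⟩ : Λ) : EuclideanSpace ℝ (Fin n)) ∈ P := by
      simpa [vadd_eq_add] using hp
    have h2 : (x +ᵥ p) - ((⟨y, hy.1⟩ : Λ) : EuclideanSpace ℝ (Fin n)) ∈ P := by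
      have h3 : x + p - y = q := by
        have := hq'
        simp only [vadd_eq_add] at this
        rw [← this]; abel
      show x + p - y ∈ P
      rw [h3]; exact hq
    have := (hw _ h1).trans (hw _ h2).symm
    exact congrArg Subtype.val this
  -- measure of the union of translates
  have hmeas' : ∀ x ∈ S, MeasurableSet (x +ᵥ P) := fun x _ => hmeas.const_vadd x
  have hvol : volume (⋃ x ∈ S, x +ᵥ P) = S.card * volume P := by
    rw [measure_biUnion_finset hdisj hmeas']
    simp [measure_vadd]
  -- inclusions
  have hsub1 : Metric.closedBall (0 : EuclideanSpace ℝ (Fin n)) (r - l₀) ⊆ ⋃ x ∈ S, x +ᵥ P := by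
    intro y hy
    obtain ⟨x, hx, -⟩ := hfund y
    have hyx : ‖y - ↑x‖ ≤ l₀ := by
      simpa [Metric.mem_closedBall, dist_eq_norm] using hPsub hx
    have hxr : ‖(x : EuclideanSpace ℝ (Fin n))‖ ≤ r := by
      have h1 : ‖y‖ ≤ r - l₀ := by simpa [Metric.mem_closedBall, dist_eq_norm] using hy
      calc ‖(x : EuclideanSpace ℝ (Fin n))‖ = ‖y - (y - ↑x)‖ := by congr 1; abel
        _ ≤ ‖y‖ + ‖y - ↑x‖ := norm_sub_le _ _
        _ ≤ (r - l₀) + l₀ := add_le_add h1 hyx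
        _ = r := by ring
    have hxS : (x : EuclideanSpace ℝ (Fin n)) ∈ S := by
      simp only [hSdef, Set.Finite.mem_toFinset, Set.mem_inter_iff, SetLike.mem_coe]
      exact ⟨x.2, by simpa [Metric.mem_closedBall, dist_eq_norm] using hxr⟩
    refine Set.mem_biUnion hxS ⟨y - ↑x, hx, ?_⟩
    simp [vadd_eq_add]
  have hsub2 : (⋃ x ∈ S, x +ᵥ P) ⊆ Metric.closedBall (0 : EuclideanSpace ℝ (Fin n)) (r + l₀) := by
    intro y hy
    obtain ⟨x, hxS, hxy⟩ := Set.mem_iUnion₂.1 hy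
    obtain ⟨p, hp, rfl⟩ := hxy
    simp only [hSdef, Set.Finite.mem_toFinset, Set.mem_inter_iff] at hxS
    have hxr : ‖x‖ ≤ r := by
      simpa [Metric.mem_closedBall, dist_eq_norm] using hxS.2
    have hpl : ‖p‖ ≤ l₀ := by
      simpa [Metric.mem_closedBall, dist_eq_norm] using hPsub hp
    simp only [Metric.mem_closedBall, dist_zero_right, vadd_eq_add]
    calc ‖x + p‖ ≤ ‖x‖ + ‖p‖ := norm_add_le _ _
      _ ≤ r + l₀ := add_le_add hxr hpl
  -- volumes of the balls
  have hfr : Module.finrank ℝ (EuclideanSpace ℝ (Fin n)) = n := finrank_euclideanSpace_fin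
  have hball : ∀ s : ℝ, 0 ≤ s → volume (Metric.closedBall (0 : EuclideanSpace ℝ (Fin n)) s) =
      ENNReal.ofReal (s ^ n) * volume (Metric.closedBall (0 : EuclideanSpace ℝ (Fin n)) 1) := by
    intro s hs
    rw [Measure.addHaar_closedBall' volume _ hs, hfr]
  have hB1ne : volume (Metric.closedBall (0 : EuclideanSpace ℝ (Fin n)) 1) ≠ ⊤ :=
    measure_closedBall_lt_top.ne
  have hPne : volume P ≠ ⊤ :=
    (lt_of_le_of_lt (measure_mono hPsub) measure_closedBall_lt_top).ne
  -- the two ENNReal inequalities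
  have hineq1 : ENNReal.ofReal ((r - l₀) ^ n) *
      volume (Metric.closedBall (0 : EuclideanSpace ℝ (Fin n)) 1) ≤ S.card * volume P := by
    rw [← hball (r - l₀) (by linarith), ← hvol]
    exact measure_mono hsub1
  have hineq2 : (S.card : ENNReal) * volume P ≤ ENNReal.ofReal ((r + l₀) ^ n) *
      volume (Metric.closedBall (0 : EuclideanSpace ℝ (Fin n)) 1) := by
    rw [← hball (r + l₀) (by linarith), ← hvol]
    exact measure_mono hsub2
  -- convert to real numbers
  have hmul_ne : (S.card : ENNReal) * volume P ≠ ⊤ := ENNReal.mul_ne_top (by simp) hPne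
  have h1r := ENNReal.toReal_mono hmul_ne hineq1
  have h2r := ENNReal.toReal_mono (ENNReal.mul_ne_top ENNReal.ofReal_ne_top hB1ne) hineq2
  rw [ENNReal.toReal_mul, ENNReal.toReal_mul,
    ENNReal.toReal_ofReal (pow_nonneg (by linarith) n), ENNReal.toReal_natCast] at h1r
  rw [ENNReal.toReal_mul, ENNReal.toReal_mul,
    ENNReal.toReal_ofReal (pow_nonneg (by linarith) n), ENNReal.toReal_natCast] at h2r
  rw [hcov, hcard]
  constructor
  · calc (r - l₀) ^ n * (volume (Metric.closedBall (0 : EuclideanSpace ℝ (Fin n)) 1)).toReal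
        ≤ (S.card : ℝ) * (volume P).toReal := h1r
      _ = (volume P).toReal * (S.card : ℝ) := mul_comm _ _
  · calc (volume P).toReal * (S.card : ℝ) = (S.card : ℝ) * (volume P).toReal := mul_comm _ _
      _ ≤ (r + l₀) ^ n * (volume (Metric.closedBall (0 : EuclideanSpace ℝ (Fin n)) 1)).toReal := h2r
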